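/- In a finite MDP with n states, if d0 is not almost-sure strongly synchronizing in T, then for every strategy σ there exist infinitely many positions i_0 < i_1 < ... with i_0 ≤ n and i_{j+1} − i_j ≤ n, such that M^σ_{i_j}(T) ≤ 1 − ε_s for each j, where ε_s = α0·α^{2n}/n², α the smallest positive transition probability and α0 the smallest positive probability in d0. -/

import Mathlib

open scoped BigOperators
open Classical Filter

/-- A finite Markov decision process with real transition probabilities. -/
structure MDP (Q A : Type) [Fintype Q] [Fintype A] where
  δ : Q → A → Q → ℝ
  δ_nonneg : ∀ q a q', 0 ≤ δ q a q'
  δ_sum : ∀ q a, ∑ q', δ q a q' = 1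

namespace MDP

variable {Q A : Type} [Fintype Q] [Fintype A]

/-- `d` is a probability distribution. -/
def IsDist (d : Q → ℝ) : Prop := (∀ q, 0 ≤ d q) ∧ ∑ q, d q = 1

/-- A (randomized, history-dependent) strategy maps a history (list of past
state-action pairs) and the current state to a distribution over actions. -/
def IsStrategy (σ : List (Q × A) → Q → A → ℝ) : Prop :=
  (∀ h q a, 0 ≤ σ h q a) ∧ ∀ h q, ∑ a, σ h q a = 1

/-- The probability of the finite path `qs` (with actions `as`) of length `i`,
under strategy `σ` from initial distribution `d0`. -/
noncomputable def pathProb (M : MDP Q A) (σ : List (Q × A) → Q → A → ℝ)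
    (d0 : Q → ℝ) (i : ℕ) (qs : Fin (i + 1) → Q) (as : Fin i → A) : ℝ :=
  d0 (qs 0) * ∏ j : Fin i,
    (σ (List.ofFn (fun k : Fin j.val =>
          (qs ⟨k.val, by have := k.isLt; have := j.isLt; omega⟩,
           as ⟨k.val, by have := k.isLt; have := j.isLt; omega⟩)))
        (qs j.castSucc) (as j))
      * M.δ (qs j.castSucc) (as j) (qs j.succ)

/-- The distribution over states after `i` steps (`M^σ_i`). -/
noncomputable def stepDist (M : MDP Q A) (σ : List (Q × A) → Q → A → ℝ)
    (d0 : Q → ℝ) (i : ℕ) (q : Q) : ℝ :=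
  ∑ qs : Fin (i + 1) → Q, ∑ as : Fin i → A,
    if qs (Fin.last i) = q then M.pathProb σ d0 i qs as else 0

/-- The probability mass that a (sub)distribution assigns to a set `T`. -/
noncomputable def mass (d : Q → ℝ) (T : Set Q) : ℝ := ∑ q, T.indicator d q

/-- The support of a (sub)distribution. -/
def supp {α : Type} (d : α → ℝ) : Set α := {q | 0 < d q}

/-- One-step sure predecessors of `Y`. -/
def Pre (M : MDP Q A) (Y : Set Q) : Set Q :=
  {q | ∃ a, ∀ q', 0 < M.δ q a q' → q' ∈ Y}

/-- Probability of reaching `T` within `i` steps. -/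
noncomputable def reachProb (M : MDP Q A) (σ : List (Q × A) → Q → A → ℝ)
    (d0 : Q → ℝ) (T : Set Q) (i : ℕ) : ℝ :=
  ∑ qs : Fin (i + 1) → Q, ∑ as : Fin i → A,
    if ∃ j, qs j ∈ T then M.pathProb σ d0 i qs as else 0

/-- `d0` is almost-sure winning for the reachability objective `◇T`:
some strategy reaches `T` with probability one. -/
def ASReach (M : MDP Q A) (d0 : Q → ℝ) (T : Set Q) : Prop :=
  ∃ σ, IsStrategy σ ∧ (⨆ i : ℕ, M.reachProb σ d0 T i) = 1

/-- `d0` is limit-sure eventually synchronizing in `T`. -/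
def LimitSureEventually (M : MDP Q A) (d0 : Q → ℝ) (T : Set Q) : Prop :=
  ∀ ε > (0 : ℝ), ∃ σ, IsStrategy σ ∧ ∃ i, 1 - ε ≤ mass (M.stepDist σ d0 i) T

/-- `d0` is almost-sure weakly synchronizing in `T`. -/
def ASWeakly (M : MDP Q A) (d0 : Q → ℝ) (T : Set Q) : Prop :=
  ∃ σ, IsStrategy σ ∧ ∀ ε > (0 : ℝ), {i : ℕ | 1 - ε ≤ mass (M.stepDist σ d0 i) T}.Infinite

/-- `d0` is almost-sure strongly synchronizing in `T`. -/
def ASStrongly (M : MDP Q A) (d0 : Q → ℝ) (T : Set Q) : Prop :=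
  ∃ σ, IsStrategy σ ∧ ∀ ε > (0 : ℝ), ∃ N, ∀ i ≥ N, 1 - ε ≤ mass (M.stepDist σ d0 i) T

/-- The uniform distribution on a set `S`. -/
noncomputable def uniformOn (S : Set Q) : Q → ℝ :=
  fun q => if q ∈ S then 1 / (S.ncard : ℝ) else 0

/-- The uniform strategy, playing all actions uniformly at random. -/
noncomputable def uniformStrategy (Q A : Type) [Fintype A] :
    List (Q × A) → Q → A → ℝ :=
  fun _ _ _ => 1 / (Fintype.card A : ℝ)

/-- Action `a` is allowed in `q` w.r.t. `S` if all its successors stay in `S`. -/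
def Allowed (M : MDP Q A) (S : Set Q) (q : Q) (a : A) : Prop :=
  ∀ q', 0 < M.δ q a q' → q' ∈ S

/-- Edge relation within `S` given the allowed actions. -/
def ECEdge (M : MDP Q A) (S : Set Q) (q q' : Q) : Prop :=
  q ∈ S ∧ q' ∈ S ∧ ∃ a, M.Allowed S q a ∧ 0 < M.δ q a q'

/-- `S` is an end-component: closed and strongly connected via allowed actions. -/
def IsEC (M : MDP Q A) (S : Set Q) : Prop :=
  (∀ q ∈ S, ∃ a, M.Allowed S q a) ∧
  ∀ q ∈ S, ∀ q' ∈ S, Relation.ReflTransGen (M.ECEdge S) q q'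

/-- The union of all end-components. -/
def ECUnion (M : MDP Q A) : Set Q := ⋃₀ {S | M.IsEC S}

/-- Positive always synchronizing in `T`. -/
def PosAlways (M : MDP Q A) (d0 : Q → ℝ) (T : Set Q) : Prop :=
  ∃ σ, IsStrategy σ ∧ ∀ i, 0 < mass (M.stepDist σ d0 i) T

/-- Positive eventually synchronizing in `T`. -/
def PosEvent (M : MDP Q A) (d0 : Q → ℝ) (T : Set Q) : Prop :=
  ∃ σ, IsStrategy σ ∧ ∃ i, 0 < mass (M.stepDist σ d0 i) T

/-- Positive weakly synchronizing in `T`. -/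
def PosWeakly (M : MDP Q A) (d0 : Q → ℝ) (T : Set Q) : Prop :=
  ∃ σ, IsStrategy σ ∧ ∀ N, ∃ i ≥ N, 0 < mass (M.stepDist σ d0 i) T

/-- Positive strongly synchronizing in `T`. -/
def PosStrongly (M : MDP Q A) (d0 : Q → ℝ) (T : Set Q) : Prop :=
  ∃ σ, IsStrategy σ ∧ ∃ N, ∀ i ≥ N, 0 < mass (M.stepDist σ d0 i) T

/-- Bounded always synchronizing in `T`. -/
def BndAlways (M : MDP Q A) (d0 : Q → ℝ) (T : Set Q) : Prop :=
  ∃ σ, IsStrategy σ ∧ ∃ ε > (0 : ℝ), ∀ i, ε < mass (M.stepDist σ d0 i) T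

/-- Bounded eventually synchronizing in `T`. -/
def BndEvent (M : MDP Q A) (d0 : Q → ℝ) (T : Set Q) : Prop :=
  ∃ σ, IsStrategy σ ∧ ∃ ε > (0 : ℝ), ∃ i, ε < mass (M.stepDist σ d0 i) T

/-- Bounded weakly synchronizing in `T`. -/
def BndWeakly (M : MDP Q A) (d0 : Q → ℝ) (T : Set Q) : Prop :=
  ∃ σ, IsStrategy σ ∧ ∃ ε > (0 : ℝ), ∀ N, ∃ i ≥ N, ε < mass (M.stepDist σ d0 i) T

/-- Bounded strongly synchronizing in `T`. -/
def BndStrongly (M : MDP Q A) (d0 : Q → ℝ) (T : Set Q) : Prop :=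
  ∃ σ, IsStrategy σ ∧ ∃ ε > (0 : ℝ), ∃ N, ∀ i ≥ N, ε < mass (M.stepDist σ d0 i) T

end MDP

namespace MDPProof

open MDP

variable {Q A : Type} [Fintype Q] [Fintype A]

lemma snoc_app {n : ℕ} {α : Type} (f : Fin n → α) (z : α) (m : Fin (n+1))
    (h : m.val < n) : Fin.snoc (α := fun _ => α) f z m = f ⟨m.val, h⟩ := by
  simp [Fin.snoc, h]; rfl

lemma pathProb_snoc (M : MDP Q A) (σ : List (Q × A) → Q → A → ℝ) (d0 : Q → ℝ)
    (i : ℕ) (qs : Fin (i+1) → Q) (as : Fin i → A) (z : Q) (b : A) :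
    M.pathProb σ d0 (i+1) (Fin.snoc qs z) (Fin.snoc as b) =
      M.pathProb σ d0 i qs as *
        (σ (List.ofFn (fun k : Fin i => (qs ⟨k.val, k.isLt.trans (Nat.lt_succ_self i)⟩, as k)))
            (qs (Fin.last i)) b *
          M.δ (qs (Fin.last i)) b z) := by
  unfold MDP.pathProb
  rw [Fin.prod_univ_castSucc, ← mul_assoc]
  congr 1
  · congr 1
    · apply Finset.prod_congr rfl
      intro j _
      have hj := j.isLt
      congr 1
      · congr 1
        · congr 1
          funext k
          have hk := k.isLt
          simp only [Fin.coe_castSucc] at hk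
          congr 1
          · exact snoc_app qs z _ (by simp only [Fin.coe_castSucc, Fin.val_succ]; omega)
          · exact snoc_app as b _ (by simp only [Fin.coe_castSucc, Fin.val_succ]; omega)
        · exact snoc_app qs z _ (by simp only [Fin.coe_castSucc, Fin.val_succ]; omega)
        · exact snoc_app as b _ (by simp only [Fin.coe_castSucc, Fin.val_succ]; omega)
      · congr 1
        · exact snoc_app qs z _ (by simp only [Fin.coe_castSucc, Fin.val_succ]; omega)
        · exact snoc_app as b _ (by simp only [Fin.coe_castSucc, Fin.val_succ]; omega)
        · exact snoc_app qs z _ (by simp only [Fin.coe_castSucc, Fin.val_succ]; omega)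
  · congr 1
    · congr 1
      · congr 1
        funext k
        have hk := k.isLt
        simp only [Fin.val_last] at hk
        congr 1
        · exact snoc_app qs z ⟨k.val, by omega⟩ (by show (k:ℕ) < i + 1; omega)
        · exact snoc_app as b ⟨k.val, by omega⟩ (by show (k:ℕ) < i; omega)
      · exact snoc_app qs z _ (by simp only [Fin.coe_castSucc, Fin.val_last]; omega)
      · exact Fin.snoc_last (α := fun _ => A) b as
    · congr 1
      · exact snoc_app qs z _ (by simp only [Fin.coe_castSucc, Fin.val_last]; omega)
      · exact Fin.snoc_last (α := fun _ => A) b as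
      · exact Fin.snoc_last (α := fun _ => Q) z qs

end MDPProof
namespace MDPProof

variable {Q A : Type} [Fintype Q] [Fintype A]

lemma pathProb_nonneg (M : MDP Q A) {σ : List (Q × A) → Q → A → ℝ} {d0 : Q → ℝ}
    (hσ : MDP.IsStrategy σ) (hd0 : ∀ q, 0 ≤ d0 q) (i : ℕ)
    (qs : Fin (i+1) → Q) (as : Fin i → A) :
    0 ≤ M.pathProb σ d0 i qs as := by
  unfold MDP.pathProb
  apply mul_nonneg (hd0 _)
  apply Finset.prod_nonneg
  intro j _
  exact mul_nonneg (hσ.1 _ _ _) (M.δ_nonneg _ _ _)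

lemma ev_eq (M : MDP Q A) (σ : List (Q × A) → Q → A → ℝ) (d0 : Q → ℝ)
    (i : ℕ) (w : Q → ℝ) :
    ∑ q, M.stepDist σ d0 i q * w q =
      ∑ qs : Fin (i+1) → Q, ∑ as : Fin i → A,
        M.pathProb σ d0 i qs as * w (qs (Fin.last i)) := by
  unfold MDP.stepDist
  simp only [Finset.sum_mul]
  rw [Finset.sum_comm]
  apply Finset.sum_congr rfl
  intro qs _
  rw [Finset.sum_comm]
  apply Finset.sum_congr rfl
  intro as _
  simp only [ite_mul, zero_mul, Finset.sum_ite_eq, Finset.mem_univ, if_true]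

lemma stepDist_zero (M : MDP Q A) (σ : List (Q × A) → Q → A → ℝ) (d0 : Q → ℝ) (q : Q) :
    M.stepDist σ d0 0 q = d0 q := by
  unfold MDP.stepDist MDP.pathProb
  simp only [Finset.univ_unique, Finset.sum_singleton]
  rw [Fintype.sum_equiv (Equiv.funUnique (Fin 1) Q) _ (fun z => if z = q then d0 z else 0)]
  · simp
  · intro qs
    simp [Fin.last]

lemma ev_step_le (M : MDP Q A) {σ : List (Q × A) → Q → A → ℝ} {d0 : Q → ℝ}
    (hσ : MDP.IsStrategy σ) (hd0 : ∀ q, 0 ≤ d0 q) {w u : Q → ℝ}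
    (hyp : ∀ h q a, 0 < σ h q a → u q ≤ ∑ q', M.δ q a q' * w q') (i : ℕ) :
    ∑ q, M.stepDist σ d0 i q * u q ≤ ∑ q, M.stepDist σ d0 (i+1) q * w q := by
  rw [ev_eq, ev_eq]
  have reindex :
      (∑ qs : Fin (i+2) → Q, ∑ as : Fin (i+1) → A,
        M.pathProb σ d0 (i+1) qs as * w (qs (Fin.last (i+1)))) =
      ∑ qs : Fin (i+1) → Q, ∑ as : Fin i → A,
        M.pathProb σ d0 i qs as *
          (∑ b : A, σ (List.ofFn (fun k : Fin i =>
              (qs ⟨k.val, k.isLt.trans (Nat.lt_succ_self i)⟩, as k))) (qs (Fin.last i)) b *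
            (∑ z : Q, M.δ (qs (Fin.last i)) b z * w z)) := by
    rw [← Equiv.sum_comp (Fin.snocEquiv (fun _ => Q))]
    rw [Fintype.sum_prod_type]
    rw [Finset.sum_comm]
    apply Finset.sum_congr rfl
    intro qs _
    have key : ∀ z : Q,
        (∑ as1 : Fin (i+1) → A,
          M.pathProb σ d0 (i+1) (Fin.snoc qs z) as1 * w z) =
        ∑ as : Fin i → A, ∑ b : A,
          M.pathProb σ d0 i qs as *
            (σ (List.ofFn (fun k : Fin i =>
                (qs ⟨k.val, k.isLt.trans (Nat.lt_succ_self i)⟩, as k))) (qs (Fin.last i)) b *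
              M.δ (qs (Fin.last i)) b z) * w z := by
      intro z
      rw [← Equiv.sum_comp (Fin.snocEquiv (fun _ => A))]
      rw [Fintype.sum_prod_type]
      rw [Finset.sum_comm]
      apply Finset.sum_congr rfl
      intro as _
      apply Finset.sum_congr rfl
      intro b _
      have e2 : (Fin.snocEquiv (fun _ => A)) (b, as) = Fin.snoc as b := rfl
      rw [e2, pathProb_snoc]
      try ring
    calc (∑ z : Q, ∑ as1 : Fin (i+1) → A,
            M.pathProb σ d0 (i+1) ((Fin.snocEquiv (fun _ => Q)) (z, qs)) as1 *
              w ((Fin.snocEquiv (fun _ => Q)) (z, qs) (Fin.last (i+1))))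
        = ∑ z : Q, ∑ as : Fin i → A, ∑ b : A,
            M.pathProb σ d0 i qs as *
              (σ (List.ofFn (fun k : Fin i =>
                  (qs ⟨k.val, k.isLt.trans (Nat.lt_succ_self i)⟩, as k))) (qs (Fin.last i)) b *
                M.δ (qs (Fin.last i)) b z) * w z := by
          apply Finset.sum_congr rfl
          intro z _
          have e1 : (Fin.snocEquiv (fun _ => Q)) (z, qs) = Fin.snoc qs z := rfl
          simp only [e1, Fin.snoc_last (α := fun _ => Q)]
          exact key z
      _ = _ := by
          rw [Finset.sum_comm]
          apply Finset.sum_congr rfl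
          intro as _
          rw [Finset.sum_comm]
          simp only [Finset.mul_sum]
          apply Finset.sum_congr rfl
          intro b _
          apply Finset.sum_congr rfl
          intro z _
          ring
  rw [reindex]
  apply Finset.sum_le_sum
  intro qs _
  apply Finset.sum_le_sum
  intro as _
  apply mul_le_mul_of_nonneg_left _ (pathProb_nonneg M hσ hd0 i qs as)
  set h := List.ofFn (fun k : Fin i =>
      (qs ⟨k.val, k.isLt.trans (Nat.lt_succ_self i)⟩, as k)) with hh
  calc u (qs (Fin.last i))
      = ∑ b : A, σ h (qs (Fin.last i)) b * u (qs (Fin.last i)) := by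
        rw [← Finset.sum_mul, hσ.2 h (qs (Fin.last i)), one_mul]
    _ ≤ ∑ b : A, σ h (qs (Fin.last i)) b *
          (∑ z : Q, M.δ (qs (Fin.last i)) b z * w z) := by
        apply Finset.sum_le_sum
        intro b _
        rcases lt_or_eq_of_le (hσ.1 h (qs (Fin.last i)) b) with hb | hb
        · exact mul_le_mul_of_nonneg_left (hyp h (qs (Fin.last i)) b hb) (le_of_lt hb)
        · rw [← hb]; simp

end MDPProof
namespace MDPProof

variable {Q A : Type} [Fintype Q] [Fintype A]

lemma ev_step_ge (M : MDP Q A) {σ : List (Q × A) → Q → A → ℝ} {d0 : Q → ℝ}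
    (hσ : MDP.IsStrategy σ) (hd0 : ∀ q, 0 ≤ d0 q) {w u : Q → ℝ}
    (hyp : ∀ h q a, 0 < σ h q a → (∑ q', M.δ q a q' * w q') ≤ u q) (i : ℕ) :
    ∑ q, M.stepDist σ d0 (i+1) q * w q ≤ ∑ q, M.stepDist σ d0 i q * u q := by
  have h2 := ev_step_le M hσ hd0 (w := fun q => -w q) (u := fun q => -u q) ?_ i
  · simp only [mul_neg, Finset.sum_neg_distrib] at h2
    · linarith
  · intro h q a ha
    have := hyp h q a ha
    simp only [mul_neg, Finset.sum_neg_distrib]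
    linarith

lemma stepDist_nonneg (M : MDP Q A) {σ : List (Q × A) → Q → A → ℝ} {d0 : Q → ℝ}
    (hσ : MDP.IsStrategy σ) (hd0 : ∀ q, 0 ≤ d0 q) (i : ℕ) (q : Q) :
    0 ≤ M.stepDist σ d0 i q := by
  unfold MDP.stepDist
  apply Finset.sum_nonneg
  intro qs _
  apply Finset.sum_nonneg
  intro as _
  split
  · exact pathProb_nonneg M hσ hd0 i qs as
  · exact le_refl 0

lemma sum_stepDist (M : MDP Q A) {σ : List (Q × A) → Q → A → ℝ} {d0 : Q → ℝ}
    (hσ : MDP.IsStrategy σ) (hd0 : MDP.IsDist d0) (i : ℕ) :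
    ∑ q, M.stepDist σ d0 i q = 1 := by
  induction i with
  | zero => simp only [stepDist_zero]; exact hd0.2
  | succ i ih =>
    have e1 : ∑ q, M.stepDist σ d0 i q * (1 : ℝ) ≤
        ∑ q, M.stepDist σ d0 (i+1) q * (1 : ℝ) := by
      apply ev_step_le M hσ hd0.1
      intro h q a _
      simp only [mul_one]
      rw [M.δ_sum q a]
    have e2 : ∑ q, M.stepDist σ d0 (i+1) q * (1 : ℝ) ≤
        ∑ q, M.stepDist σ d0 i q * (1 : ℝ) := by
      apply ev_step_ge M hσ hd0.1
      intro h q a _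
      simp only [mul_one]
      rw [M.δ_sum q a]
    simp only [mul_one] at e1 e2
    rw [ih] at e1 e2
    linarith

lemma mass_eq (d : Q → ℝ) (T : Set Q) :
    MDP.mass d T = ∑ q, d q * (if q ∈ T then (1:ℝ) else 0) := by
  unfold MDP.mass
  apply Finset.sum_congr rfl
  intro q _
  rw [Set.indicator_apply]
  split <;> simp

/-! ### Generic chain lemmas -/

lemma ncard_le_card (X : Set Q) : X.ncard ≤ Fintype.card Q := by
  have := Set.ncard_le_ncard (Set.subset_univ X) Set.finite_univ
  rwa [Set.ncard_univ, Nat.card_eq_fintype_card] at this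

lemma chain_propagate (F : ℕ → Set Q) (H : Set Q → Set Q) (hF : ∀ k, F (k+1) = H (F k))
    {j : ℕ} (hj : F (j+1) = F j) : ∀ l, j ≤ l → F l = F j := by
  intro l hl
  induction l with
  | zero =>
    have hj0 : j = 0 := Nat.le_zero.mp hl
    rw [hj0]
  | succ l ih =>
    rcases Nat.lt_or_ge l j with h | h
    · have : j = l + 1 := by omega
      rw [this]
    · rw [hF l, ih h, ← hF j, hj]

lemma chain_exists_stab_up (F : ℕ → Set Q) (G : Set Q → Set Q)
    (hF : ∀ k, F (k+1) = F k ∪ G (F k)) :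
    ∃ j ≤ Fintype.card Q, F (j+1) = F j := by
  by_contra hc
  push_neg at hc
  have hcard : ∀ j, j ≤ Fintype.card Q + 1 → j ≤ (F j).ncard := by
    intro j hj
    induction j with
    | zero => exact Nat.zero_le _
    | succ j ih =>
      have hne : F (j+1) ≠ F j := hc j (by omega)
      have hss : F j ⊂ F (j+1) := by
        refine ⟨by rw [hF j]; exact Set.subset_union_left, ?_⟩
        intro hsub
        exact hne (le_antisymm hsub (by rw [hF j]; exact Set.subset_union_left))
      have := Set.ncard_lt_ncard hss (Set.toFinite _)
      have := ih (by omega)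
      omega
  have h1 := hcard (Fintype.card Q + 1) le_rfl
  have h2 := ncard_le_card (F (Fintype.card Q + 1))
  omega

lemma chain_exists_stab_up' (F : ℕ → Set Q) (G : Set Q → Set Q)
    (hF : ∀ k, F (k+1) = F k ∪ G (F k)) (h0 : (F 0).Nonempty) :
    ∃ j, j + 1 ≤ Fintype.card Q ∧ F (j+1) = F j := by
  by_contra hc
  push_neg at hc
  have hcard : ∀ j, j ≤ Fintype.card Q → j + 1 ≤ (F j).ncard := by
    intro j hj
    induction j with
    | zero =>
      have := (Set.ncard_pos (Set.toFinite (F 0))).mpr h0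
      omega
    | succ j ih =>
      have hne : F (j+1) ≠ F j := hc j (by omega)
      have hss : F j ⊂ F (j+1) := by
        refine ⟨by rw [hF j]; exact Set.subset_union_left, ?_⟩
        intro hsub
        exact hne (le_antisymm hsub (by rw [hF j]; exact Set.subset_union_left))
      have := Set.ncard_lt_ncard hss (Set.toFinite _)
      have := ih (by omega)
      omega
  have h1 := hcard (Fintype.card Q) le_rfl
  have h2 := ncard_le_card (F (Fintype.card Q))
  omega

lemma chain_exists_stab_down (F : ℕ → Set Q) (G : Set Q → Set Q)
    (hF : ∀ k, F (k+1) = F k ∩ G (F k)) :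
    ∃ j ≤ Fintype.card Q, F (j+1) = F j := by
  by_contra hc
  push_neg at hc
  have hcard : ∀ j, j ≤ Fintype.card Q + 1 → (F j).ncard + j ≤ (F 0).ncard := by
    intro j hj
    induction j with
    | zero => omega
    | succ j ih =>
      have hne : F (j+1) ≠ F j := hc j (by omega)
      have hss : F (j+1) ⊂ F j := by
        refine ⟨by rw [hF j]; exact Set.inter_subset_left, ?_⟩
        intro hsub
        exact hne (le_antisymm (by rw [hF j]; exact Set.inter_subset_left) hsub)
      have := Set.ncard_lt_ncard hss (Set.toFinite _)
      have := ih (by omega)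
      omega
  have h1 := hcard (Fintype.card Q + 1) le_rfl
  have h2 := ncard_le_card (F 0)
  omega

end MDPProof
namespace MDPProof

variable {Q A : Type} [Fintype Q] [Fintype A]

lemma exists_pos_delta (M : MDP Q A) (q : Q) (a : A) : ∃ q', 0 < M.δ q a q' := by
  by_contra hc
  push_neg at hc
  have : ∑ q', M.δ q a q' = 0 := by
    apply Finset.sum_eq_zero
    intro q' _
    exact le_antisymm (hc q') (M.δ_nonneg q a q')
  rw [M.δ_sum q a] at this
  norm_num at this

/-- Safe sets for the safety objective □T. -/
def SafeSet (M : MDP Q A) (T : Set Q) (X : Set Q) : Prop :=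
  X ⊆ T ∧ ∀ q ∈ X, ∃ a, ∀ q', 0 < M.δ q a q' → q' ∈ X

/-- The sure winning region for □T. -/
def SS (M : MDP Q A) (T : Set Q) : Set Q := ⋃₀ {X | SafeSet M T X}

lemma SS_sub_T (M : MDP Q A) (T : Set Q) : SS M T ⊆ T := by
  intro q hq
  obtain ⟨X, hX, hqX⟩ := hq
  exact hX.1 hqX

lemma SS_safe (M : MDP Q A) (T : Set Q) :
    ∀ q ∈ SS M T, ∃ a, ∀ q', 0 < M.δ q a q' → q' ∈ SS M T := by
  intro q hq
  obtain ⟨X, hX, hqX⟩ := hq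
  obtain ⟨a, ha⟩ := hX.2 q hqX
  exact ⟨a, fun q' h => ⟨X, hX, ha q' h⟩⟩

lemma SS_maximal (M : MDP Q A) (T : Set Q) {X : Set Q} (h : SafeSet M T X) :
    X ⊆ SS M T := Set.subset_sUnion_of_mem h

/-- The rank iteration for states that (for every action) risk leaving `T`. -/
def Rch (M : MDP Q A) (T : Set Q) : ℕ → Set Q
  | 0 => Tᶜ
  | j+1 => Rch M T j ∪ {q | ∀ a, ∃ q', 0 < M.δ q a q' ∧ q' ∈ Rch M T j}

lemma Rch_mono (M : MDP Q A) (T : Set Q) {j k : ℕ} (h : j ≤ k) :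
    Rch M T j ⊆ Rch M T k := by
  induction k with
  | zero => have : j = 0 := by omega
            rw [this]
  | succ k ih =>
    rcases Nat.lt_or_ge j (k+1) with h' | h'
    · exact (ih (by omega)).trans Set.subset_union_left
    · have : j = k + 1 := by omega
      rw [this]

lemma Rch_step (M : MDP Q A) (T : Set Q) {j : ℕ} {q : Q}
    (hq : q ∈ Rch M T (j+1)) (hq0 : q ∉ Rch M T 0) :
    ∀ a, ∃ q', 0 < M.δ q a q' ∧ q' ∈ Rch M T j := by
  induction j with
  | zero =>
    rcases hq with h | h
    · exact absurd h hq0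
    · exact h
  | succ j ih =>
    rcases hq with h | h
    · intro a
      obtain ⟨q', h1, h2⟩ := ih h a
      exact ⟨q', h1, Rch_mono M T (Nat.le_succ j) h2⟩
    · exact h

lemma compl_SS_sub_Rch (M : MDP Q A) (T : Set Q) (hT : Tᶜ.Nonempty) :
    (SS M T)ᶜ ⊆ Rch M T (Fintype.card Q - 1) := by
  obtain ⟨j, hj, hstab⟩ := chain_exists_stab_up' (Rch M T)
    (fun X => {q | ∀ a, ∃ q', 0 < M.δ q a q' ∧ q' ∈ X}) (fun k => rfl) hT
  have hsafe : SafeSet M T (Rch M T j)ᶜ := by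
    constructor
    · intro q hq
      by_contra hqT
      exact hq (Rch_mono M T (Nat.zero_le j) hqT)
    · intro q hq
      have hq1 : q ∉ Rch M T (j+1) := by rw [hstab]; exact hq
      have : ¬ (∀ a, ∃ q', 0 < M.δ q a q' ∧ q' ∈ Rch M T j) := by
        intro hall
        exact hq1 (Set.mem_union_right _ hall)
      push_neg at this
      obtain ⟨a, ha⟩ := this
      refine ⟨a, fun q' hδ hmem => ?_⟩
      exact (ha q' hδ) hmem
  intro q hq
  have : q ∈ Rch M T j := by
    by_contra hc
    exact hq (SS_maximal M T hsafe hc)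
  exact Rch_mono M T (by omega) this

/-- Progress set: states with an action keeping surely in `Z` and reaching `Y`
with positive probability. -/
def Prog (M : MDP Q A) (Z Y : Set Q) : Set Q :=
  {q | ∃ a, (∀ q', 0 < M.δ q a q' → q' ∈ Z) ∧ (∃ q', 0 < M.δ q a q' ∧ q' ∈ Y)}

lemma Prog_mono (M : MDP Q A) {Z Z' Y Y' : Set Q} (hZ : Z ⊆ Z') (hY : Y ⊆ Y') :
    Prog M Z Y ⊆ Prog M Z' Y' := by
  rintro q ⟨a, h1, q', h2, h3⟩
  exact ⟨a, fun r hr => hZ (h1 r hr), ⟨q', h2, hY h3⟩⟩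

/-- The inner (least fixpoint) iteration for almost-sure reachability of `SS`. -/
def Yit (M : MDP Q A) (T : Set Q) (Z : Set Q) : ℕ → Set Q
  | 0 => SS M T
  | r+1 => Yit M T Z r ∪ Prog M Z (Yit M T Z r)

lemma Yit_mono_r (M : MDP Q A) (T : Set Q) (Z : Set Q) {r s : ℕ} (h : r ≤ s) :
    Yit M T Z r ⊆ Yit M T Z s := by
  induction s with
  | zero => have : r = 0 := by omega
            rw [this]
  | succ s ih =>
    rcases Nat.lt_or_ge r (s+1) with h' | h'
    · exact (ih (by omega)).trans Set.subset_union_left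
    · have : r = s + 1 := by omega
      rw [this]

lemma Yit_mono_Z (M : MDP Q A) (T : Set Q) {Z Z' : Set Q} (h : Z ⊆ Z') (r : ℕ) :
    Yit M T Z r ⊆ Yit M T Z' r := by
  induction r with
  | zero => exact le_refl _
  | succ r ih =>
    exact Set.union_subset_union ih (Prog_mono M h ih |>.trans (le_refl _))

lemma Yit_stab (M : MDP Q A) (T : Set Q) (Z : Set Q) (r : ℕ)
    (hr : Fintype.card Q ≤ r) :
    Yit M T Z r = Yit M T Z (Fintype.card Q) := by
  obtain ⟨j, hj, hstab⟩ := chain_exists_stab_up (Yit M T Z)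
    (fun X => Prog M Z X) (fun k => rfl)
  have hprop := chain_propagate (Yit M T Z) (fun X => X ∪ Prog M Z X) (fun k => rfl) hstab
  rw [hprop r (by omega), hprop (Fintype.card Q) hj]

/-- A set is good if it is contained in the limit of its own reach-iteration. -/
def Good (M : MDP Q A) (T : Set Q) (Z : Set Q) : Prop :=
  Z ⊆ Yit M T Z (Fintype.card Q)

/-- The almost-sure winning region for reaching `SS`. -/
def WW (M : MDP Q A) (T : Set Q) : Set Q := ⋃₀ {Z | Good M T Z}

lemma WW_good (M : MDP Q A) (T : Set Q) : Good M T (WW M T) := by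
  intro q hq
  obtain ⟨Z, hZ, hqZ⟩ := hq
  exact Yit_mono_Z M T (Set.subset_sUnion_of_mem hZ) (Fintype.card Q) (hZ hqZ)

lemma SS_sub_WW (M : MDP Q A) (T : Set Q) : SS M T ⊆ WW M T := by
  apply Set.subset_sUnion_of_mem
  show SS M T ⊆ Yit M T (SS M T) (Fintype.card Q)
  exact Yit_mono_r M T _ (Nat.zero_le _)

lemma Yit_WW_sub_WW (M : MDP Q A) (T : Set Q) (r : ℕ) :
    Yit M T (WW M T) r ⊆ WW M T := by
  have key : Yit M T (WW M T) (Fintype.card Q) ⊆ WW M T := by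
    apply Set.subset_sUnion_of_mem
    show Good M T (Yit M T (WW M T) (Fintype.card Q))
    intro q hq
    have h1 : WW M T ⊆ Yit M T (WW M T) (Fintype.card Q) := WW_good M T
    exact Yit_mono_Z M T h1 (Fintype.card Q) hq
  rcases Nat.le_total r (Fintype.card Q) with h | h
  · exact (Yit_mono_r M T _ h).trans key
  · rw [Yit_stab M T _ r h]; exact key

/-- The decreasing outer iteration converging to `WW`. -/
def Zc (M : MDP Q A) (T : Set Q) : ℕ → Set Q
  | 0 => Set.univ
  | k+1 => Zc M T k ∩ Yit M T (Zc M T k) (Fintype.card Q)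

lemma WW_sub_Zc (M : MDP Q A) (T : Set Q) : ∀ k, WW M T ⊆ Zc M T k := by
  intro k
  induction k with
  | zero => exact Set.subset_univ _
  | succ k ih =>
    intro q hq
    refine ⟨ih hq, ?_⟩
    exact Yit_mono_Z M T ih (Fintype.card Q) (WW_good M T hq)

lemma Zc_stab (M : MDP Q A) (T : Set Q) :
    ∃ j ≤ Fintype.card Q, Zc M T (j+1) = Zc M T j ∧ Zc M T j = WW M T := by
  obtain ⟨j, hj, hstab⟩ := chain_exists_stab_down (Zc M T)
    (fun X => Yit M T X (Fintype.card Q)) (fun k => rfl)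
  refine ⟨j, hj, hstab, ?_⟩
  apply le_antisymm
  · apply Set.subset_sUnion_of_mem
    show Good M T (Zc M T j)
    intro q hq
    have : q ∈ Zc M T (j+1) := by rw [hstab]; exact hq
    exact this.2
  · exact WW_sub_Zc M T j

lemma Zc_eq_WW_of_ge (M : MDP Q A) (T : Set Q) {l : ℕ} (hl : Fintype.card Q ≤ l) :
    Zc M T l = WW M T := by
  obtain ⟨j, hj, hstab, hW⟩ := Zc_stab M T
  have hprop := chain_propagate (Zc M T)
    (fun X => X ∩ Yit M T X (Fintype.card Q)) (fun k => rfl) hstab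
  rw [hprop l (by omega), hW]

end MDPProof
namespace MDPProof

variable {Q A : Type} [Fintype Q] [Fintype A]

/-- Level of a state outside `WW`: stage of the outer iteration removing it. -/
noncomputable def lvl (M : MDP Q A) (T : Set Q) (q : Q) : ℕ :=
  if h : ∃ k, q ∉ Zc M T (k+1) then Nat.find h else 0

lemma lvl_le (M : MDP Q A) (T : Set Q) {q : Q} {k : ℕ} (h : q ∉ Zc M T (k+1)) :
    lvl M T q ≤ k := by
  rw [lvl, dif_pos ⟨k, h⟩]
  exact Nat.find_le h

lemma lvl_spec (M : MDP Q A) (T : Set Q) {q : Q} (hq : q ∉ WW M T) :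
    q ∈ Zc M T (lvl M T q) ∧ q ∉ Zc M T (lvl M T q + 1) ∧
      lvl M T q + 1 ≤ Fintype.card Q := by
  have hex : ∃ k, q ∉ Zc M T (k+1) := by
    refine ⟨Fintype.card Q, ?_⟩
    rw [Zc_eq_WW_of_ge M T (by omega)]
    exact hq
  have hdef : lvl M T q = Nat.find hex := by rw [lvl, dif_pos hex]
  obtain ⟨j, hj, hstab, hWj⟩ := Zc_stab M T
  have hj1 : 1 ≤ j := by
    by_contra hc
    have : j = 0 := by omega
    rw [this] at hWj
    exact hq (hWj ▸ Set.mem_univ q)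
  have hfind_le : Nat.find hex ≤ j - 1 := by
    apply Nat.find_le
    have : j - 1 + 1 = j := by omega
    rw [this, hWj]
    exact hq
  refine ⟨?_, ?_, by omega⟩
  · rw [hdef]
    rcases Nat.eq_zero_or_pos (Nat.find hex) with h0 | h0
    · rw [h0]; exact Set.mem_univ q
    · have := Nat.find_min hex (m := Nat.find hex - 1) (by omega)
      have heq : Nat.find hex - 1 + 1 = Nat.find hex := by omega
      rw [heq] at this
      exact not_not.mp this
  · rw [hdef]; exact Nat.find_spec hex

lemma WW_sub_Yit_Zc (M : MDP Q A) (T : Set Q) (k : ℕ) :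
    WW M T ⊆ Yit M T (Zc M T k) (Fintype.card Q) :=
  (WW_good M T).trans (Yit_mono_Z M T (WW_sub_Zc M T k) _)

lemma lvl_step (M : MDP Q A) (T : Set Q) {q : Q} (hq : q ∉ WW M T) (a : A) :
    (∃ q', 0 < M.δ q a q' ∧ q' ∉ WW M T ∧ lvl M T q' + 1 ≤ lvl M T q) ∨
    (∀ q', 0 < M.δ q a q' → q' ∉ WW M T ∧ lvl M T q' ≤ lvl M T q) := by
  obtain ⟨hmem, hnot, _⟩ := lvl_spec M T hq
  set k := lvl M T q with hk
  have hqY : q ∉ Yit M T (Zc M T k) (Fintype.card Q) := by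
    intro hY
    exact hnot ⟨hmem, hY⟩
  have hqY1 : q ∉ Yit M T (Zc M T k) (Fintype.card Q + 1) := by
    rw [Yit_stab M T _ _ (by omega)]
    exact hqY
  have hqP : q ∉ Prog M (Zc M T k) (Yit M T (Zc M T k) (Fintype.card Q)) := by
    intro hP
    exact hqY1 (Set.mem_union_right _ hP)
  by_cases hP : ∀ q', 0 < M.δ q a q' → q' ∈ Zc M T k
  · right
    intro q' hδ
    have hq'Y : q' ∉ Yit M T (Zc M T k) (Fintype.card Q) := by
      intro hY
      exact hqP ⟨a, hP, ⟨q', hδ, hY⟩⟩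
    have hq'W : q' ∉ WW M T := fun h => hq'Y (WW_sub_Yit_Zc M T k h)
    refine ⟨hq'W, ?_⟩
    apply lvl_le
    intro hmem'
    exact hq'Y hmem'.2
  · left
    push_neg at hP
    obtain ⟨q', hδ, hq'Z⟩ := hP
    have hq'W : q' ∉ WW M T := fun h => hq'Z (WW_sub_Zc M T k h)
    refine ⟨q', hδ, hq'W, ?_⟩
    have hk1 : 1 ≤ k := by
      by_contra hc
      have : k = 0 := by omega
      rw [this] at hq'Z
      exact hq'Z (Set.mem_univ q')
    have : lvl M T q' ≤ k - 1 := by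
      apply lvl_le
      have : k - 1 + 1 = k := by omega
      rw [this]
      exact hq'Z
    omega

section Alpha

variable {M : MDP Q A} {α : ℝ}
variable (hα : IsLeast {x : ℝ | 0 < x ∧ ∃ q a q', M.δ q a q' = x} α)

include hα

lemma alpha_pos : 0 < α := hα.1.1

lemma delta_ge_alpha {q : Q} {a : A} {q' : Q} (h : 0 < M.δ q a q') :
    α ≤ M.δ q a q' := hα.2 ⟨h, q, a, q', rfl⟩

lemma alpha_le_one : α ≤ 1 := by
  obtain ⟨hpos, q, a, q', hδ⟩ := hα.1
  rw [← hδ]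
  rw [← M.δ_sum q a]
  apply Finset.single_le_sum (f := fun r => M.δ q a r) (fun r _ => M.δ_nonneg q a r)
    (Finset.mem_univ q')

/-- The superharmonic potential: `α^(lvl q)` outside `WW`, `0` on `WW`. -/
noncomputable def cf (M : MDP Q A) (T : Set Q) (α : ℝ) (q : Q) : ℝ :=
  if q ∈ WW M T then 0 else α ^ (lvl M T q)

omit hα in
lemma cf_nonneg (T : Set Q) (hαpos : 0 < α) (q : Q) : 0 ≤ cf M T α q := by
  unfold cf
  split
  · exact le_refl 0
  · positivity

lemma cf_superharmonic (T : Set Q) (q : Q) (a : A) :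
    cf M T α q ≤ ∑ q', M.δ q a q' * cf M T α q' := by
  have h0 : 0 ≤ α := le_of_lt (alpha_pos hα)
  have h1 : α ≤ 1 := alpha_le_one hα
  by_cases hq : q ∈ WW M T
  · rw [cf, if_pos hq]
    apply Finset.sum_nonneg
    intro q' _
    exact mul_nonneg (M.δ_nonneg q a q') (cf_nonneg T (alpha_pos hα) q')
  · rw [cf, if_neg hq]
    rcases lvl_step M T hq a with ⟨q', hδ, hW', hlvl⟩ | hall
    · have hterm : α ^ (lvl M T q) ≤ M.δ q a q' * cf M T α q' := by
        rw [cf, if_neg hW']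
        calc α ^ (lvl M T q) ≤ α ^ (lvl M T q' + 1) :=
              pow_le_pow_of_le_one h0 h1 hlvl
          _ = α * α ^ (lvl M T q') := by ring
          _ ≤ M.δ q a q' * α ^ (lvl M T q') := by
              apply mul_le_mul_of_nonneg_right (delta_ge_alpha hα hδ)
              positivity
      calc α ^ (lvl M T q) ≤ M.δ q a q' * cf M T α q' := hterm
        _ ≤ ∑ r, M.δ q a r * cf M T α r := by
            apply Finset.single_le_sum (f := fun r => M.δ q a r * cf M T α r)
              (fun r _ => mul_nonneg (M.δ_nonneg q a r) (cf_nonneg T (alpha_pos hα) r))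
              (Finset.mem_univ q')
    · calc α ^ (lvl M T q) = ∑ q', M.δ q a q' * α ^ (lvl M T q) := by
            rw [← Finset.sum_mul, M.δ_sum q a, one_mul]
      _ ≤ ∑ q', M.δ q a q' * cf M T α q' := by
          apply Finset.sum_le_sum
          intro q' _
          rcases lt_or_eq_of_le (M.δ_nonneg q a q') with hδ | hδ
          · apply mul_le_mul_of_nonneg_left _ (le_of_lt hδ)
            obtain ⟨hW', hlvl⟩ := hall q' hδ
            rw [cf, if_neg hW']
            exact pow_le_pow_of_le_one h0 h1 hlvl
          · rw [← hδ]; simp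

end Alpha

end MDPProof
namespace MDPProof

variable {Q A : Type} [Fintype Q] [Fintype A]

/-- Rank of a state inside `WW`: stage of the inner reach-iteration. -/
noncomputable def rnk (M : MDP Q A) (T : Set Q) (q : Q) : ℕ :=
  if h : ∃ r, q ∈ Yit M T (WW M T) r then Nat.find h else 0

lemma rnk_le (M : MDP Q A) (T : Set Q) {q : Q} {j : ℕ}
    (h : q ∈ Yit M T (WW M T) j) : rnk M T q ≤ j := by
  rw [rnk, dif_pos ⟨j, h⟩]
  exact Nat.find_le h

lemma rnk_spec (M : MDP Q A) (T : Set Q) {q : Q} (hq : q ∈ WW M T) :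
    q ∈ Yit M T (WW M T) (rnk M T q) ∧
      (q ∉ SS M T → 1 ≤ rnk M T q ∧
        q ∈ Prog M (WW M T) (Yit M T (WW M T) (rnk M T q - 1))) := by
  have hex : ∃ r, q ∈ Yit M T (WW M T) r := ⟨Fintype.card Q, WW_good M T hq⟩
  have hdef : rnk M T q = Nat.find hex := by rw [rnk, dif_pos hex]
  have hmem : q ∈ Yit M T (WW M T) (rnk M T q) := by
    rw [hdef]; exact Nat.find_spec hex
  refine ⟨hmem, fun hS => ?_⟩
  have h1 : 1 ≤ rnk M T q := by
    by_contra hc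
    have h0 : rnk M T q = 0 := by omega
    rw [h0] at hmem
    exact hS hmem
  refine ⟨h1, ?_⟩
  have hmin : q ∉ Yit M T (WW M T) (rnk M T q - 1) := by
    rw [hdef]
    apply Nat.find_min hex
    omega
  have heq : rnk M T q - 1 + 1 = rnk M T q := by omega
  have := hmem
  rw [← heq] at this
  rcases this with h | h
  · exact absurd h hmin
  · exact h

variable [Nonempty A]

/-- The memoryless action choice: safe inside `SS`, progressing inside `WW`. -/
noncomputable def act (M : MDP Q A) (T : Set Q) (q : Q) : A :=
  if hS : q ∈ SS M T then Classical.choose (SS_safe M T q hS)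
  else if hW : q ∈ WW M T then Classical.choose ((rnk_spec M T hW).2 hS).2
  else Classical.arbitrary A

lemma act_safe (M : MDP Q A) (T : Set Q) {q : Q} (hS : q ∈ SS M T) :
    ∀ q', 0 < M.δ q (act M T q) q' → q' ∈ SS M T := by
  rw [act, dif_pos hS]
  exact Classical.choose_spec (SS_safe M T q hS)

lemma act_WW (M : MDP Q A) (T : Set Q) {q : Q} (hW : q ∈ WW M T) :
    ∀ q', 0 < M.δ q (act M T q) q' → q' ∈ WW M T := by
  by_cases hS : q ∈ SS M T
  · intro q' h
    exact SS_sub_WW M T (act_safe M T hS q' h)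
  · rw [act, dif_neg hS, dif_pos hW]
    exact (Classical.choose_spec ((rnk_spec M T hW).2 hS).2).1

lemma act_prog (M : MDP Q A) (T : Set Q) {q : Q} (hW : q ∈ WW M T) (hS : q ∉ SS M T) :
    ∃ q', 0 < M.δ q (act M T q) q' ∧ q' ∈ Yit M T (WW M T) (rnk M T q - 1) := by
  rw [act, dif_neg hS, dif_pos hW]
  exact (Classical.choose_spec ((rnk_spec M T hW).2 hS).2).2

/-- The memoryless deterministic strategy given by `act`. -/
noncomputable def sigmaStar (M : MDP Q A) (T : Set Q) : List (Q × A) → Q → A → ℝ :=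
  fun _ q a => if a = act M T q then 1 else 0

lemma sigmaStar_strategy (M : MDP Q A) (T : Set Q) :
    MDP.IsStrategy (sigmaStar M T) := by
  constructor
  · intro h q a
    unfold sigmaStar
    split <;> norm_num
  · intro h q
    unfold sigmaStar
    simp

lemma sigmaStar_pos (M : MDP Q A) (T : Set Q) {h : List (Q × A)} {q : Q} {a : A}
    (hpos : 0 < sigmaStar M T h q a) : a = act M T q := by
  by_contra hc
  rw [sigmaStar, if_neg hc] at hpos
  exact lt_irrefl 0 hpos

/-- Exact hitting-probability iterates for `sigmaStar`. -/
noncomputable def useq (M : MDP Q A) (T : Set Q) : ℕ → Q → ℝ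
  | 0, q => if q ∈ SS M T then 1 else 0
  | r+1, q => ∑ q', M.δ q (act M T q) q' * useq M T r q'

lemma useq_nonneg (M : MDP Q A) (T : Set Q) : ∀ r q, 0 ≤ useq M T r q := by
  intro r
  induction r with
  | zero => intro q; rw [useq]; split <;> norm_num
  | succ r ih =>
    intro q
    rw [useq]
    apply Finset.sum_nonneg
    intro q' _
    exact mul_nonneg (M.δ_nonneg _ _ _) (ih q')

lemma useq_le_one (M : MDP Q A) (T : Set Q) : ∀ r q, useq M T r q ≤ 1 := by
  intro r
  induction r with
  | zero => intro q; rw [useq]; split <;> norm_num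
  | succ r ih =>
    intro q
    rw [useq]
    calc ∑ q', M.δ q (act M T q) q' * useq M T r q'
        ≤ ∑ q', M.δ q (act M T q) q' * 1 := by
          apply Finset.sum_le_sum
          intro q' _
          exact mul_le_mul_of_nonneg_left (ih q') (M.δ_nonneg _ _ _)
      _ = 1 := by rw [← Finset.sum_mul, M.δ_sum, one_mul]

lemma useq_SS (M : MDP Q A) (T : Set Q) : ∀ r, ∀ q ∈ SS M T, useq M T r q = 1 := by
  intro r
  induction r with
  | zero => intro q hq; rw [useq, if_pos hq]
  | succ r ih =>
    intro q hq
    rw [useq]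
    have : ∀ q', M.δ q (act M T q) q' * useq M T r q' = M.δ q (act M T q) q' * 1 := by
      intro q'
      rcases lt_or_eq_of_le (M.δ_nonneg q (act M T q) q') with hδ | hδ
      · rw [ih q' (act_safe M T hq q' hδ)]
      · rw [← hδ]; ring
    rw [Finset.sum_congr rfl (fun q' _ => this q'), ← Finset.sum_mul, M.δ_sum, one_mul]

lemma useq_mono (M : MDP Q A) (T : Set Q) : ∀ r q, useq M T r q ≤ useq M T (r+1) q := by
  intro r
  induction r with
  | zero =>
    intro q
    by_cases hq : q ∈ SS M T
    · rw [useq_SS M T 0 q hq, useq_SS M T 1 q hq]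
    · rw [useq, if_neg hq]
      exact useq_nonneg M T 1 q
  | succ r ih =>
    intro q
    rw [useq, useq]
    apply Finset.sum_le_sum
    intro q' _
    exact mul_le_mul_of_nonneg_left (ih q') (M.δ_nonneg _ _ _)

lemma useq_mono_le (M : MDP Q A) (T : Set Q) {r s : ℕ} (h : r ≤ s) (q : Q) :
    useq M T r q ≤ useq M T s q := by
  induction s with
  | zero => have : r = 0 := by omega
            rw [this]
  | succ s ih =>
    rcases Nat.lt_or_ge r (s+1) with h' | h'
    · exact (ih (by omega)).trans (useq_mono M T s q)
    · have : r = s + 1 := by omega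
      rw [this]

end MDPProof
namespace MDPProof

variable {Q A : Type} [Fintype Q] [Fintype A]

lemma delta_le_one (M : MDP Q A) (q : Q) (a : A) (q' : Q) : M.δ q a q' ≤ 1 := by
  rw [← M.δ_sum q a]
  exact Finset.single_le_sum (f := fun r => M.δ q a r)
    (fun r _ => M.δ_nonneg q a r) (Finset.mem_univ q')

section KInd

variable [Nonempty A] {M : MDP Q A} {α : ℝ}
variable (hα : IsLeast {x : ℝ | 0 < x ∧ ∃ q a q', M.δ q a q' = x} α)

include hα

lemma K_induction (T : Set Q) (r : ℕ) (m : ℝ) (hm : 0 ≤ m)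
    (hbase : ∀ q ∈ WW M T, 1 - useq M T r q ≤ m) :
    ∀ j, ∀ q ∈ WW M T, q ∈ Yit M T (WW M T) j →
      1 - useq M T (r+j) q ≤ (1 - α ^ j) * m := by
  have h0 : (0:ℝ) ≤ α := (alpha_pos hα).le
  have h1 : α ≤ 1 := alpha_le_one hα
  intro j
  induction j with
  | zero =>
    intro q hW hY
    have hqS : q ∈ SS M T := hY
    rw [Nat.add_zero, useq_SS M T r q hqS]
    simp
  | succ j ih =>
    intro q hW hY
    have hαj : (0:ℝ) ≤ α ^ j := pow_nonneg h0 j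
    have hαj1 : α ^ (j+1) ≤ 1 := pow_le_one₀ h0 h1
    by_cases hS : q ∈ SS M T
    · rw [useq_SS M T _ q hS]
      have : (0:ℝ) ≤ (1 - α ^ (j+1)) * m := mul_nonneg (by linarith) hm
      linarith
    · obtain ⟨q'', hδ'', hq''Y⟩ := act_prog M T hW hS
      have hrle : rnk M T q ≤ j + 1 := rnk_le M T hY
      have hq''Yj : q'' ∈ Yit M T (WW M T) j :=
        Yit_mono_r M T _ (by omega) hq''Y
      have hq''W : q'' ∈ WW M T := Yit_WW_sub_WW M T j hq''Yj
      have hIH := ih q'' hq''W hq''Yj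
      have hexp : 1 - useq M T (r+(j+1)) q =
          ∑ q', M.δ q (act M T q) q' * (1 - useq M T (r+j) q') := by
        have hre : r+(j+1) = (r+j)+1 := by omega
        rw [hre, useq]
        simp only [mul_sub, mul_one, Finset.sum_sub_distrib, M.δ_sum]
      rw [hexp, ← Finset.sum_erase_add _ _ (Finset.mem_univ q'')]
      have hsum_erase : ∑ q' ∈ Finset.univ.erase q'', M.δ q (act M T q) q' =
          1 - M.δ q (act M T q) q'' := by
        have := Finset.sum_erase_add Finset.univ (fun q' => M.δ q (act M T q) q')
          (Finset.mem_univ q'')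
        rw [M.δ_sum] at this
        linarith
      have hothers : ∑ q' ∈ Finset.univ.erase q'',
          M.δ q (act M T q) q' * (1 - useq M T (r+j) q') ≤
          (1 - M.δ q (act M T q) q'') * m := by
        calc ∑ q' ∈ Finset.univ.erase q'',
            M.δ q (act M T q) q' * (1 - useq M T (r+j) q')
            ≤ ∑ q' ∈ Finset.univ.erase q'', M.δ q (act M T q) q' * m := by
              apply Finset.sum_le_sum
              intro q' _
              rcases lt_or_eq_of_le (M.δ_nonneg q (act M T q) q') with hδ | hδ
              · apply mul_le_mul_of_nonneg_left _ hδ.le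
                have hq'W : q' ∈ WW M T := act_WW M T hW q' hδ
                have := hbase q' hq'W
                have := useq_mono_le M T (Nat.le_add_right r j) q'
                linarith
              · rw [← hδ]; simp
          _ = (1 - M.δ q (act M T q) q'') * m := by
              rw [← Finset.sum_mul, hsum_erase]
      have hlast : M.δ q (act M T q) q'' * (1 - useq M T (r+j) q'') ≤
          M.δ q (act M T q) q'' * ((1 - α ^ j) * m) :=
        mul_le_mul_of_nonneg_left hIH (M.δ_nonneg _ _ _)
      have hδa : α ≤ M.δ q (act M T q) q'' := delta_ge_alpha hα hδ''
      have hkey : α ^ (j+1) * m ≤ M.δ q (act M T q) q'' * α ^ j * m := by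
        apply mul_le_mul_of_nonneg_right _ hm
        rw [pow_succ, mul_comm (α ^ j) α]
        exact mul_le_mul_of_nonneg_right hδa hαj
      nlinarith [M.δ_nonneg q (act M T q) q'']
end KInd

end MDPProof
namespace MDPProof

variable {Q A : Type} [Fintype Q] [Fintype A]

section Converge

variable [Nonempty A] {M : MDP Q A} {α : ℝ}
variable (hα : IsLeast {x : ℝ | 0 < x ∧ ∃ q a q', M.δ q a q' = x} α)

include hα

lemma E_bound (T : Set Q) :
    ∀ k, ∀ q ∈ WW M T, 1 - useq M T (k * Fintype.card Q) q ≤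
      (1 - α ^ Fintype.card Q) ^ k := by
  have h0 : (0:ℝ) ≤ α := (alpha_pos hα).le
  have h1 : α ≤ 1 := alpha_le_one hα
  have hβ0 : (0:ℝ) ≤ 1 - α ^ Fintype.card Q := by
    have := pow_le_one₀ h0 h1 (n := Fintype.card Q)
    linarith
  intro k
  induction k with
  | zero =>
    intro q hW
    have := useq_nonneg M T 0 q
    simpa using by linarith
  | succ k ih =>
    intro q hW
    have hstep := K_induction hα T (k * Fintype.card Q)
      ((1 - α ^ Fintype.card Q) ^ k) (pow_nonneg hβ0 k) ih
      (Fintype.card Q) q hW (WW_good M T hW)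
    have he1 : k * Fintype.card Q + Fintype.card Q = (k+1) * Fintype.card Q := by ring
    rw [he1] at hstep
    calc 1 - useq M T ((k+1) * Fintype.card Q) q
        ≤ (1 - α ^ Fintype.card Q) * (1 - α ^ Fintype.card Q) ^ k := hstep
      _ = (1 - α ^ Fintype.card Q) ^ (k+1) := by rw [pow_succ]; ring

lemma useq_push (T : Set Q) (d0 : Q → ℝ) (hd0 : MDP.IsDist d0) :
    ∀ t r, ∑ q, d0 q * useq M T (r+t) q ≤
      ∑ q, M.stepDist (sigmaStar M T) d0 t q * useq M T r q := by
  intro t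
  induction t with
  | zero =>
    intro r
    apply le_of_eq
    apply Finset.sum_congr rfl
    intro q _
    rw [stepDist_zero, Nat.add_zero]
  | succ t ih =>
    intro r
    have h1 := ih (r+1)
    have h2 : ∑ q, M.stepDist (sigmaStar M T) d0 t q * useq M T (r+1) q ≤
        ∑ q, M.stepDist (sigmaStar M T) d0 (t+1) q * useq M T r q := by
      apply ev_step_le M (sigmaStar_strategy M T) hd0.1
      intro h q a ha
      rw [sigmaStar_pos M T ha]
      apply le_of_eq
      rw [useq]
    have he : r + (t+1) = (r+1) + t := by omega
    rw [he]
    exact le_trans h1 h2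

lemma as_strongly_of_supp (T : Set Q) (d0 : Q → ℝ) (hd0 : MDP.IsDist d0)
    (hsupp : ∀ q, 0 < d0 q → q ∈ WW M T) : MDP.ASStrongly M d0 T := by
  have h0 : (0:ℝ) ≤ α := (alpha_pos hα).le
  have h1 : α ≤ 1 := alpha_le_one hα
  have hβ0 : (0:ℝ) ≤ 1 - α ^ Fintype.card Q := by
    have := pow_le_one₀ h0 h1 (n := Fintype.card Q)
    linarith
  have hβ1 : 1 - α ^ Fintype.card Q < 1 := by
    have : (0:ℝ) < α ^ Fintype.card Q := pow_pos (alpha_pos hα) _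
    linarith
  refine ⟨sigmaStar M T, sigmaStar_strategy M T, ?_⟩
  intro ε hε
  obtain ⟨k, hk⟩ : ∃ k, (1 - α ^ Fintype.card Q) ^ k < ε := by
    have := (tendsto_pow_atTop_nhds_zero_of_lt_one hβ0 hβ1).eventually
      (gt_mem_nhds hε)
    exact this.exists
  refine ⟨k * Fintype.card Q, fun i hi => ?_⟩
  set n := Fintype.card Q
  set E := (1 - α ^ n) ^ k with hE
  -- Step 1: ∑ d0 * useq i ≥ 1 - E
  have hstep1 : 1 - E ≤ ∑ q, d0 q * useq M T i q := by
    have : ∀ q, d0 q * (1 - E) ≤ d0 q * useq M T i q := by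
      intro q
      rcases lt_or_eq_of_le (hd0.1 q) with hq | hq
      · apply mul_le_mul_of_nonneg_left _ hq.le
        have hW := hsupp q hq
        have hb := E_bound hα T k q hW
        have hmono := useq_mono_le M T hi q
        linarith
      · rw [← hq]; simp
    calc 1 - E = ∑ q, d0 q * (1 - E) := by
          rw [← Finset.sum_mul, hd0.2, one_mul]
      _ ≤ ∑ q, d0 q * useq M T i q := Finset.sum_le_sum (fun q _ => this q)
  -- Step 2: push through
  have hstep2 := useq_push hα T d0 hd0 i 0
  rw [Nat.zero_add] at hstep2
  -- Step 3: compare with mass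
  have hstep3 : ∑ q, M.stepDist (sigmaStar M T) d0 i q * useq M T 0 q ≤
      MDP.mass (M.stepDist (sigmaStar M T) d0 i) T := by
    rw [mass_eq]
    apply Finset.sum_le_sum
    intro q _
    apply mul_le_mul_of_nonneg_left _
      (stepDist_nonneg M (sigmaStar_strategy M T) hd0.1 i q)
    rw [useq]
    by_cases hq : q ∈ SS M T
    · rw [if_pos hq, if_pos (SS_sub_T M T hq)]
    · rw [if_neg hq]
      split <;> norm_num
  linarith

end Converge

end MDPProof
namespace MDPProof

variable {Q A : Type} [Fintype Q] [Fintype A]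

lemma mass_mono (d : Q → ℝ) (hd : ∀ q, 0 ≤ d q) {X Y : Set Q} (hXY : X ⊆ Y) :
    MDP.mass d X ≤ MDP.mass d Y := by
  rw [mass_eq, mass_eq]
  apply Finset.sum_le_sum
  intro q _
  apply mul_le_mul_of_nonneg_left _ (hd q)
  by_cases hq : q ∈ X
  · rw [if_pos hq, if_pos (hXY hq)]
  · rw [if_neg hq]
    split <;> norm_num

lemma mass_add_compl (d : Q → ℝ) (X : Set Q) :
    MDP.mass d X + MDP.mass d Xᶜ = ∑ q, d q := by
  rw [mass_eq, mass_eq, ← Finset.sum_add_distrib]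
  apply Finset.sum_congr rfl
  intro q _
  by_cases hq : q ∈ X
  · rw [if_pos hq, if_neg (by simp [hq])]
    ring
  · rw [if_neg hq, if_pos (by simp [hq])]
    ring

lemma mass_sub (d : Q → ℝ) {X Y : Set Q} (hXY : X ⊆ Y) :
    ∑ q, d q * (if q ∈ Y ∧ q ∉ X then 1 else 0) = MDP.mass d Y - MDP.mass d X := by
  rw [mass_eq, mass_eq, ← Finset.sum_sub_distrib]
  apply Finset.sum_congr rfl
  intro q _
  by_cases h1 : q ∈ Y
  · by_cases h2 : q ∈ X
    · rw [if_neg (by simp [h2]), if_pos h1, if_pos h2]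
      ring
    · rw [if_pos ⟨h1, h2⟩, if_pos h1, if_neg h2]
      ring
  · have h2 : q ∉ X := fun h => h1 (hXY h)
    rw [if_neg (by tauto), if_neg h1, if_neg h2]
    ring

section Dip

variable {M : MDP Q A} {α α0 : ℝ} {T : Set Q}
variable {σ : List (Q × A) → Q → A → ℝ} {d0 : Q → ℝ}
variable (hα : IsLeast {x : ℝ | 0 < x ∧ ∃ q a q', M.δ q a q' = x} α)
variable (hσ : MDP.IsStrategy σ) (hd0 : MDP.IsDist d0)

include hα hσ hd0

lemma dip_step (j i : ℕ) :
    α * (MDP.mass (M.stepDist σ d0 i) (Rch M T (j+1)) -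
          MDP.mass (M.stepDist σ d0 i) (Rch M T 0)) ≤
      MDP.mass (M.stepDist σ d0 (i+1)) (Rch M T j) := by
  have hle := ev_step_le M hσ hd0.1
    (w := fun q => if q ∈ Rch M T j then (1:ℝ) else 0)
    (u := fun q => α * (if q ∈ Rch M T (j+1) ∧ q ∉ Rch M T 0 then (1:ℝ) else 0))
    ?_ i
  · have lhs_eq : ∑ q, M.stepDist σ d0 i q *
        (α * (if q ∈ Rch M T (j+1) ∧ q ∉ Rch M T 0 then (1:ℝ) else 0)) =
        α * (MDP.mass (M.stepDist σ d0 i) (Rch M T (j+1)) -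
          MDP.mass (M.stepDist σ d0 i) (Rch M T 0)) := by
      rw [← mass_sub (M.stepDist σ d0 i) (Rch_mono M T (Nat.zero_le (j+1))),
        Finset.mul_sum]
      apply Finset.sum_congr rfl
      intro q _
      ring
    have rhs_eq : ∑ q, M.stepDist σ d0 (i+1) q *
        (if q ∈ Rch M T j then (1:ℝ) else 0) =
        MDP.mass (M.stepDist σ d0 (i+1)) (Rch M T j) := (mass_eq _ _).symm
    rw [lhs_eq, rhs_eq] at hle
    exact hle
  · intro h q a _
    by_cases hq : q ∈ Rch M T (j+1) ∧ q ∉ Rch M T 0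
    · rw [if_pos hq, mul_one]
      obtain ⟨q', hδ, hmem⟩ := Rch_step M T hq.1 hq.2 a
      calc α ≤ M.δ q a q' := delta_ge_alpha hα hδ
        _ = M.δ q a q' * (if q' ∈ Rch M T j then (1:ℝ) else 0) := by
            rw [if_pos hmem, mul_one]
        _ ≤ ∑ r, M.δ q a r * (if r ∈ Rch M T j then (1:ℝ) else 0) := by
            apply Finset.single_le_sum
              (f := fun r => M.δ q a r * (if r ∈ Rch M T j then (1:ℝ) else 0))
              (fun r _ => mul_nonneg (M.δ_nonneg q a r) (by split <;> norm_num))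
              (Finset.mem_univ q')
    · rw [if_neg hq, mul_zero]
      apply Finset.sum_nonneg
      intro r _
      exact mul_nonneg (M.δ_nonneg q a r) (by split <;> norm_num)

variable (hα0 : IsLeast {x : ℝ | 0 < x ∧ ∃ q, d0 q = x} α0)

include hα0

lemma eta_bound {q0 : Q} (hq0 : 0 < d0 q0) (hq0W : q0 ∉ WW M T) (i : ℕ) :
    α0 * α ^ (Fintype.card Q - 1) ≤ MDP.mass (M.stepDist σ d0 i) (SS M T)ᶜ := by
  have h0 : (0:ℝ) ≤ α := (alpha_pos hα).le
  have h1 : α ≤ 1 := alpha_le_one hα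
  -- the expected value of cf is monotone in i
  have hmono : ∀ i, ∑ q, d0 q * cf M T α q ≤
      ∑ q, M.stepDist σ d0 i q * cf M T α q := by
    intro i
    induction i with
    | zero =>
      apply le_of_eq
      apply Finset.sum_congr rfl
      intro q _
      rw [stepDist_zero]
    | succ i ih =>
      refine le_trans ih (ev_step_le M hσ hd0.1 ?_ i)
      intro h q a _
      exact cf_superharmonic hα T q a
  have hinit : α0 * α ^ (Fintype.card Q - 1) ≤ ∑ q, d0 q * cf M T α q := by
    have hterm : α0 * α ^ (Fintype.card Q - 1) ≤ d0 q0 * cf M T α q0 := by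
      have hcf : cf M T α q0 = α ^ (lvl M T q0) := by rw [cf, if_neg hq0W]
      have hlvl : lvl M T q0 ≤ Fintype.card Q - 1 := by
        have := (lvl_spec M T hq0W).2.2
        omega
      have hpow : α ^ (Fintype.card Q - 1) ≤ α ^ (lvl M T q0) :=
        pow_le_pow_of_le_one h0 h1 hlvl
      have hd0q0 : α0 ≤ d0 q0 := hα0.2 ⟨hq0, q0, rfl⟩
      rw [hcf]
      apply mul_le_mul hd0q0 hpow (by positivity) hq0.le
    calc α0 * α ^ (Fintype.card Q - 1) ≤ d0 q0 * cf M T α q0 := hterm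
      _ ≤ ∑ q, d0 q * cf M T α q := by
          apply Finset.single_le_sum (f := fun q => d0 q * cf M T α q)
            (fun q _ => mul_nonneg (hd0.1 q) (cf_nonneg T (alpha_pos hα) q))
            (Finset.mem_univ q0)
  have hfinal : ∑ q, M.stepDist σ d0 i q * cf M T α q ≤
      MDP.mass (M.stepDist σ d0 i) (SS M T)ᶜ := by
    rw [mass_eq]
    apply Finset.sum_le_sum
    intro q _
    apply mul_le_mul_of_nonneg_left _ (stepDist_nonneg M hσ hd0.1 i q)
    by_cases hq : q ∈ SS M T
    · rw [cf, if_pos (SS_sub_WW M T hq), if_neg (by simp [hq])]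
    · rw [if_pos (by simp [hq])]
      rw [cf]
      split
      · norm_num
      · exact pow_le_one₀ h0 h1
  linarith [hmono i]

lemma window_dip {q0 : Q} (hq0 : 0 < d0 q0) (hq0W : q0 ∉ WW M T)
    (hT : Tᶜ.Nonempty) (k : ℕ) :
    ∃ i, k ≤ i ∧ i ≤ k + (Fintype.card Q - 1) ∧
      α0 * α ^ (2 * Fintype.card Q) / (Fintype.card Q : ℝ) ^ 2 ≤
        MDP.mass (M.stepDist σ d0 i) Tᶜ := by
  set n := Fintype.card Q with hn
  have hn1 : 1 ≤ n := by
    rcases hT with ⟨t, _⟩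
    exact Fintype.card_pos_iff.mpr ⟨t⟩
  have h0 : (0:ℝ) ≤ α := (alpha_pos hα).le
  have h1 : α ≤ 1 := alpha_le_one hα
  have hα00 : 0 < α0 := hα0.1.1
  set m := n - 1 with hm
  set η := α0 * α ^ m with hη
  set ε := α0 * α ^ (2 * n) / (n : ℝ) ^ 2 with hε
  by_contra hc
  push_neg at hc
  -- all masses in the window are < ε
  have hsmall : ∀ t, t ≤ m → MDP.mass (M.stepDist σ d0 (k+t)) Tᶜ < ε := by
    intro t ht
    exact hc (k+t) (by omega) (by omega)
  have hαp : 0 < α := alpha_pos hα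
  have hnR : (0:ℝ) < (n:ℝ) := by exact_mod_cast hn1
  have hεpos : 0 < ε := div_pos (mul_pos hα00 (pow_pos hαp _)) (by positivity)
  -- downward induction
  have hg : ∀ t, t ≤ m → α ^ t * η - t * ε ≤
      MDP.mass (M.stepDist σ d0 (k+t)) (Rch M T (m - t)) := by
    intro t
    induction t with
    | zero =>
      intro _
      have h1' := eta_bound hα hσ hd0 hα0 hq0 hq0W k
      have h2' := mass_mono (M.stepDist σ d0 k) (stepDist_nonneg M hσ hd0.1 k)
        (compl_SS_sub_Rch M T hT)
      have hb := le_trans h1' h2'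
      simpa [hη, hm, hn] using hb
    | succ t ih =>
      intro ht
      have iht := ih (by omega)
      have hbt := hsmall t (by omega)
      have hstep := dip_step hα hσ hd0 (T := T) (m - (t+1)) (k+t)
      have hidx : m - (t+1) + 1 = m - t := by omega
      rw [hidx] at hstep
      have hRch0 : Rch M T 0 = Tᶜ := rfl
      rw [hRch0] at hstep
      have hki : k + t + 1 = k + (t+1) := by omega
      rw [hki] at hstep
      have htε : (0:ℝ) ≤ t * ε + ε := by positivity
      have hchain : α ^ (t+1) * η - (t+1) * ε ≤
          α * (MDP.mass (M.stepDist σ d0 (k+t)) (Rch M T (m - t)) -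
            MDP.mass (M.stepDist σ d0 (k+t)) Tᶜ) := by
        have e1 : α * (α ^ t * η - t * ε - ε) ≥
            α * (α ^ t * η) - (t * ε + ε) := by
          have : α * (t * ε + ε) ≤ 1 * (t * ε + ε) :=
            mul_le_mul_of_nonneg_right h1 htε
          nlinarith
        have e2 : α * (α ^ t * η) = α ^ (t+1) * η := by ring
        have e3 : MDP.mass (M.stepDist σ d0 (k+t)) (Rch M T (m - t)) -
            MDP.mass (M.stepDist σ d0 (k+t)) Tᶜ ≥ α ^ t * η - t * ε - ε := by
          linarith
        have e4 : α * (MDP.mass (M.stepDist σ d0 (k+t)) (Rch M T (m - t)) -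
            MDP.mass (M.stepDist σ d0 (k+t)) Tᶜ) ≥ α * (α ^ t * η - t * ε - ε) :=
          mul_le_mul_of_nonneg_left e3 h0
        push_cast
        nlinarith
      push_cast
      push_cast at hchain
      linarith
  -- conclusion at t = m
  have hfin := hg m le_rfl
  have hRch0 : Rch M T (m - m) = Tᶜ := by
    have hmm : m - m = 0 := by omega
    rw [hmm]
    rfl
  rw [hRch0] at hfin
  have hbm := hsmall m le_rfl
  -- so α^m * η < (m+1) ε = n ε
  have hlt : α ^ m * η < (n:ℝ) * ε := by
    have hcast : ((m:ℝ) + 1) = (n:ℝ) := by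
      rw [hm]
      push_cast [Nat.cast_sub hn1]
      ring
    nlinarith
  -- but n ε ≤ α^m * η
  have hge : (n:ℝ) * ε ≤ α ^ m * η := by
    have hne : (0:ℝ) < (n:ℝ) := by exact_mod_cast hn1
    have e1 : (n:ℝ) * ε = α0 * α ^ (2*n) / n := by
      rw [hε]
      field_simp
    have e2 : α ^ m * η = α0 * α ^ (2*n - 2) := by
      have hmm : m + m = 2*n - 2 := by omega
      rw [hη]
      calc α ^ m * (α0 * α ^ m) = α0 * (α ^ m * α ^ m) := by ring
        _ = α0 * α ^ (m + m) := by rw [pow_add]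
        _ = α0 * α ^ (2*n-2) := by rw [hmm]
    rw [e1, e2]
    have h3 : α ^ (2*n) ≤ α ^ (2*n - 2) := pow_le_pow_of_le_one h0 h1 (by omega)
    have h4 : α0 * α ^ (2*n) / n ≤ α0 * α ^ (2*n) := by
      apply div_le_self (by positivity)
      exact_mod_cast hn1
    have h5 : α0 * α ^ (2*n) ≤ α0 * α ^ (2*n - 2) :=
      mul_le_mul_of_nonneg_left h3 hα00.le
    linarith
  linarith

end Dip

end MDPProof

open MDP in
/-- If `d0` is not almost-sure strongly synchronizing in `T`, then for every
strategy there are infinitely many positions `i_0 < i_1 < ⋯` with `i_0 ≤ n` and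
`i_{j+1} - i_j ≤ n`, at which `M^σ_{i_j}(T) ≤ 1 - ε_s`, with
`ε_s = α0 * α^(2n) / n²`. -/
theorem stmt9 {Q A : Type} [Fintype Q] [Fintype A] (M : MDP Q A)
    (d0 : Q → ℝ) (hd0 : IsDist d0) (T : Set Q) (α α0 : ℝ)
    (hα : IsLeast {x : ℝ | 0 < x ∧ ∃ q a q', M.δ q a q' = x} α)
    (hα0 : IsLeast {x : ℝ | 0 < x ∧ ∃ q, d0 q = x} α0)
    (h : ¬ M.ASStrongly d0 T) :
    ∀ σ, IsStrategy σ → ∃ f : ℕ → ℕ, StrictMono f ∧ f 0 ≤ Fintype.card Q ∧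
      (∀ j, f (j + 1) - f j ≤ Fintype.card Q) ∧
      ∀ j, mass (M.stepDist σ d0 (f j)) T ≤
        1 - α0 * α ^ (2 * Fintype.card Q) / (Fintype.card Q : ℝ) ^ 2 := by
  intro σ hσ
  have hnA : Nonempty A := by
    obtain ⟨_, q, a, q', _⟩ := hα.1
    exact ⟨a⟩
  by_cases hsupp : ∀ q, 0 < d0 q → q ∈ MDPProof.WW M T
  · exact absurd (MDPProof.as_strongly_of_supp hα T d0 hd0 hsupp) h
  push_neg at hsupp
  obtain ⟨q0, hq0, hq0W⟩ := hsupp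
  have hT : Tᶜ.Nonempty := by
    rcases Set.eq_empty_or_nonempty Tᶜ with he | hne
    · exfalso
      have hTuniv : ∀ q, q ∈ T := by
        intro q
        by_contra hq
        exact (Set.eq_empty_iff_forall_notMem.mp he q) hq
      have hsafe : MDPProof.SafeSet M T Set.univ :=
        ⟨fun q _ => hTuniv q,
         fun q _ => ⟨Classical.arbitrary A, fun q' _ => Set.mem_univ q'⟩⟩
      exact hq0W (MDPProof.SS_sub_WW M T
        (MDPProof.SS_maximal M T hsafe (Set.mem_univ q0)))
    · exact hne
  have hn1 : 1 ≤ Fintype.card Q := by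
    rcases hT with ⟨t, _⟩
    exact Fintype.card_pos_iff.mpr ⟨t⟩
  have key : ∀ k, ∃ i, k ≤ i ∧ i ≤ k + (Fintype.card Q - 1) ∧
      α0 * α ^ (2 * Fintype.card Q) / (Fintype.card Q : ℝ) ^ 2 ≤
        MDP.mass (M.stepDist σ d0 i) Tᶜ :=
    fun k => MDPProof.window_dip hα hσ hd0 hα0 hq0 hq0W hT k
  let f : ℕ → ℕ := fun j =>
    Nat.rec (Classical.choose (key 0))
      (fun _ prev => Classical.choose (key (prev + 1))) j
  have hf0 := Classical.choose_spec (key 0)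
  have hspec : ∀ j, f j + 1 ≤ f (j+1) ∧
      f (j+1) ≤ (f j + 1) + (Fintype.card Q - 1) ∧
      α0 * α ^ (2 * Fintype.card Q) / (Fintype.card Q : ℝ) ^ 2 ≤
        MDP.mass (M.stepDist σ d0 (f (j+1))) Tᶜ := by
    intro j
    exact Classical.choose_spec (key (f j + 1))
  have hmass : ∀ j, α0 * α ^ (2 * Fintype.card Q) / (Fintype.card Q : ℝ) ^ 2 ≤
      MDP.mass (M.stepDist σ d0 (f j)) Tᶜ := by
    intro j
    cases j with
    | zero => exact hf0.2.2
    | succ j => exact (hspec j).2.2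
  refine ⟨f, ?_, ?_, ?_, ?_⟩
  · apply strictMono_nat_of_lt_succ
    intro j
    have := (hspec j).1
    omega
  · have hf0e : f 0 = Classical.choose (key 0) := rfl
    have := hf0.2.1
    rw [hf0e]
    omega
  · intro j
    have := (hspec j).2.2
    have := (hspec j).2.1
    omega
  · intro j
    have hm := hmass j
    have hadd := MDPProof.mass_add_compl (M.stepDist σ d0 (f j)) T
    have hsum := MDPProof.sum_stepDist M hσ hd0 (f j)
    rw [hsum] at hadd
    linarith
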